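/- There exists an uncountable family of additive subgroups H of ℚ, pairwise non-isomorphic as abstract abelian groups, such that each H contains ℤ, each H is invariant under multiplication by 2 and by 1/2 (so x ↦ 2x is a group automorphism of H), and for every n ≥ 1 the quotient group H/(2^n − 1)H is finite of cardinality 2^n − 1. -/

import Mathlib

open Classical in
noncomputable def Hgrp (S : Set ℕ) : AddSubgroup ℚ where
  carrier := {x | ∀ p : ℕ, p.Prime → p ≠ 2 →
      (-1 ≤ padicValRat p x ∧ (p ∉ S → 0 ≤ padicValRat p x))}
  zero_mem' := by intro p hp h2; simp
  add_mem' := by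
    intro a b ha hb
    by_cases hab : a + b = 0
    · rw [hab]; intro p hp h2; simp
    · intro p hp h2
      haveI : Fact p.Prime := ⟨hp⟩
      have h := padicValRat.min_le_padicValRat_add (p := p) hab
      constructor
      · exact le_trans (le_min (ha p hp h2).1 (hb p hp h2).1) h
      · intro hS
        exact le_trans (le_min ((ha p hp h2).2 hS) ((hb p hp h2).2 hS)) h
  neg_mem' := by
    intro a ha p hp h2
    rw [padicValRat.neg]
    exact ha p hp h2

lemma mem_Hgrp {S : Set ℕ} {x : ℚ} :
    x ∈ Hgrp S ↔ ∀ p : ℕ, p.Prime → p ≠ 2 →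
      (-1 ≤ padicValRat p x ∧ (p ∉ S → 0 ≤ padicValRat p x)) := Iff.rfl

lemma intCast_mem_Hgrp (S : Set ℕ) (m : ℤ) : (m : ℚ) ∈ Hgrp S := by
  intro p hp h2
  rw [padicValRat.of_int]
  refine ⟨le_trans (by norm_num) (Int.natCast_nonneg _), fun _ => Int.natCast_nonneg _⟩

lemma padicValRat_two {p : ℕ} (hp : p.Prime) (h2 : p ≠ 2) : padicValRat p 2 = 0 := by
  have : ¬ (p : ℤ) ∣ 2 := by
    have : ((2:ℤ)) = ((2:ℕ) : ℤ) := rfl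
    rw [this, Int.natCast_dvd_natCast]
    intro h
    exact h2 ((Nat.prime_dvd_prime_iff_eq hp Nat.prime_two).1 h)
  have h := padicValInt.eq_zero_of_not_dvd this
  have : ((2:ℤ) : ℚ) = 2 := by norm_num
  rw [← this, padicValRat.of_int, h, Int.natCast_zero]

lemma two_mul_mem {S : Set ℕ} {x : ℚ} (hx : x ∈ Hgrp S) : 2 * x ∈ Hgrp S := by
  by_cases h0 : x = 0
  · simp [h0, (Hgrp S).zero_mem]
  intro p hp h2
  haveI : Fact p.Prime := ⟨hp⟩
  rw [padicValRat.mul (by norm_num) h0, padicValRat_two hp h2, zero_add]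
  exact hx p hp h2

lemma half_mem {S : Set ℕ} {x : ℚ} (hx : x ∈ Hgrp S) : x / 2 ∈ Hgrp S := by
  by_cases h0 : x = 0
  · simp [h0, (Hgrp S).zero_mem]
  intro p hp h2
  haveI : Fact p.Prime := ⟨hp⟩
  rw [padicValRat.div h0 (by norm_num), padicValRat_two hp h2, sub_zero]
  exact hx p hp h2

lemma padicValRat_inv_prime {p r : ℕ} (hp : p.Prime) (hr : r.Prime) :
    padicValRat r ((p : ℚ)⁻¹) = -(if r = p then 1 else 0) := by
  haveI : Fact r.Prime := ⟨hr⟩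
  rw [padicValRat.inv, neg_inj]
  have : ((p:ℚ)) = ((p:ℕ) : ℚ) := rfl
  rw [this, padicValRat.of_nat]
  by_cases h : r = p
  · subst h; rw [padicValNat.self hr.one_lt]; simp
  · rw [padicValNat.eq_zero_of_not_dvd (by
      intro hd
      exact h ((Nat.prime_dvd_prime_iff_eq hr hp).1 hd))]
    simp [h]

lemma inv_prime_mem {S : Set ℕ} {p : ℕ} (hp : p.Prime) (hS : p ∈ S) :
    (p : ℚ)⁻¹ ∈ Hgrp S := by
  intro r hr h2
  rw [padicValRat_inv_prime hp hr]
  by_cases h : r = p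
  · subst h; simp [hS]
  · simp [h]

lemma inv_prime_not_mem {S : Set ℕ} {p : ℕ} (hp : p.Prime) (h2 : p ≠ 2) (hS : p ∉ S) :
    (p : ℚ)⁻¹ ∉ Hgrp S := by
  intro hmem
  have := (hmem p hp h2).2 hS
  rw [padicValRat_inv_prime hp hp] at this
  simp at this

lemma one_mem_Hgrp (S : Set ℕ) : (1:ℚ) ∈ Hgrp S := by
  have := intCast_mem_Hgrp S 1; simpa using this

lemma equiv_scaling {H₁ H₂ : AddSubgroup ℚ} (h1 : (1:ℚ) ∈ H₁) (f : ↥H₁ ≃+ ↥H₂)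
    (x : ↥H₁) : (f x : ℚ) = (f ⟨1, h1⟩ : ℚ) * x := by
  set q : ℚ := (f ⟨1, h1⟩ : ℚ) with hq
  set n : ℤ := (x : ℚ).num with hn
  set dd : ℕ := (x : ℚ).den with hdd
  have hdd0 : (dd : ℚ) ≠ 0 := by
    simp [hdd, Rat.den_nz]
  have hx : (x : ℚ) = (n : ℚ) / dd := (Rat.num_div_den _).symm
  have key : ((dd : ℤ) • x) = (n • (⟨1, h1⟩ : ↥H₁)) := by
    apply Subtype.ext
    push_cast
    simp only [zsmul_eq_mul, smul_eq_mul, mul_one]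
    rw [hx]
    field_simp
    push_cast
    ring
  have := congrArg f key
  rw [map_zsmul, map_zsmul] at this
  have hcoe := congrArg (fun y : ↥H₂ => (y : ℚ)) this
  push_cast at hcoe
  -- hcoe : dd * f x = n * q
  rw [hx]
  field_simp
  simp only [zsmul_eq_mul] at hcoe
  push_cast at hcoe
  linarith [hcoe]

lemma padicValRat_eq_zero_of_large {q : ℚ} (hq : q ≠ 0) {p : ℕ} (hp : p.Prime)
    (h1 : q.num.natAbs < p) (h2 : q.den < p) : padicValRat p q = 0 := by
  rw [padicValRat_def, padicValInt.eq_zero_of_not_dvd, padicValNat.eq_zero_of_not_dvd]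
  · simp
  · intro hd
    exact absurd (Nat.le_of_dvd q.pos hd) (by omega)
  · intro hd
    rw [Int.natCast_dvd] at hd
    have hnum : q.num.natAbs ≠ 0 := by
      simp [Int.natAbs_eq_zero, Rat.num_ne_zero.2 hq]
    exact absurd (Nat.le_of_dvd (Nat.pos_of_ne_zero hnum) hd) (by omega)

lemma no_iso {S T : Set ℕ}
    (hST : {p | p ∈ S ∧ p ∉ T ∧ p.Prime ∧ p ≠ 2}.Infinite) :
    IsEmpty (↥(Hgrp S) ≃+ ↥(Hgrp T)) := by
  constructor
  intro f
  set q : ℚ := (f ⟨1, one_mem_Hgrp S⟩ : ℚ) with hq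
  have hq0 : q ≠ 0 := by
    intro h
    have : f ⟨1, one_mem_Hgrp S⟩ = 0 := Subtype.ext h
    have := f.injective (this.trans (map_zero f).symm)
    rw [Subtype.ext_iff] at this
    norm_num at this
  obtain ⟨p, hpmem, hplarge⟩ :=
    hST.exists_notMem_finset (Finset.range (q.num.natAbs + q.den + 1))
  obtain ⟨hpS, hpT, hp, hp2⟩ := hpmem
  simp only [Finset.mem_range, not_lt] at hplarge
  haveI : Fact p.Prime := ⟨hp⟩
  have hv : padicValRat p q = 0 :=
    padicValRat_eq_zero_of_large hq0 hp (by omega) (by omega)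
  set x : ↥(Hgrp S) := ⟨(p:ℚ)⁻¹, inv_prime_mem hp hpS⟩ with hx
  have hfx : (f x : ℚ) = q * (p:ℚ)⁻¹ := equiv_scaling _ f x
  have hmem : (q * (p:ℚ)⁻¹) ∈ Hgrp T := hfx ▸ (f x).2
  have hple := (hmem p hp hp2).2 hpT
  have hpne : (p:ℚ) ≠ 0 := Nat.cast_ne_zero.2 hp.ne_zero
  rw [padicValRat.mul hq0 (inv_ne_zero hpne), hv,
    padicValRat_inv_prime hp hp] at hple
  simp at hple

/-! ### The map to `ZMod m` -/

noncomputable def phi0 (m : ℕ) (y : ℚ) : ZMod m :=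
  (y.num : ZMod m) * ((y.den : ℕ) : ZMod m)⁻¹

lemma phi0_intCast (m : ℕ) (z : ℤ) : phi0 m (z : ℚ) = (z : ZMod m) := by
  simp [phi0, Rat.num_intCast, Rat.den_intCast, ZMod.inv_one]

lemma num_eq_mul_den (z : ℚ) : (z.num : ℚ) = z * z.den := by
  have hd : (z.den : ℚ) ≠ 0 := by exact_mod_cast z.den_nz
  exact (div_eq_iff hd).1 (Rat.num_div_den z)

lemma phi0_add (m : ℕ) {x y : ℚ} (hux : IsUnit ((x.den : ℕ) : ZMod m))
    (huy : IsUnit ((y.den : ℕ) : ZMod m)) :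
    phi0 m (x + y) = phi0 m x + phi0 m y := by
  have huz : IsUnit (((x + y).den : ℕ) : ZMod m) := by
    refine isUnit_of_dvd_unit ?_ (hux.mul huy)
    exact_mod_cast Nat.cast_dvd_cast (α := ZMod m) (Rat.add_den_dvd x y)
  have hId : ((x+y).num) * (x.den : ℤ) * (y.den : ℤ) =
      x.num * (y.den : ℤ) * ((x+y).den : ℤ) + y.num * (x.den : ℤ) * ((x+y).den : ℤ) := by
    have hx := num_eq_mul_den x
    have hy := num_eq_mul_den y
    have hz := num_eq_mul_den (x + y)
    apply (Int.cast_injective (α := ℚ))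
    push_cast
    rw [hz, hx, hy]
    ring
  have E : ((x+y).num : ZMod m) * (x.den : ℕ) * (y.den : ℕ) =
      (x.num : ZMod m) * (y.den : ℕ) * ((x+y).den : ℕ)
        + (y.num : ZMod m) * (x.den : ℕ) * ((x+y).den : ℕ) := by
    have := congrArg (fun z : ℤ => (z : ZMod m)) hId
    push_cast at this
    exact this
  have h1 : ((x.den : ℕ) : ZMod m) * ((x.den : ℕ) : ZMod m)⁻¹ = 1 :=
    ZMod.mul_inv_of_unit _ hux
  have h2 : ((y.den : ℕ) : ZMod m) * ((y.den : ℕ) : ZMod m)⁻¹ = 1 :=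
    ZMod.mul_inv_of_unit _ huy
  have h3 : (((x+y).den : ℕ) : ZMod m) * (((x+y).den : ℕ) : ZMod m)⁻¹ = 1 :=
    ZMod.mul_inv_of_unit _ huz
  have cancel := IsUnit.mul_right_injective ((hux.mul huy).mul huz)
  apply cancel
  show ((x.den : ℕ) : ZMod m) * (y.den : ℕ) * ((x+y).den : ℕ) * (phi0 m (x+y)) = _
  unfold phi0
  linear_combination (((x.den : ℕ) : ZMod m) * (y.den : ℕ) * ((x+y).num : ZMod m)) * h3
    - (((y.den : ℕ) : ZMod m) * ((x+y).den : ℕ) * (x.num : ZMod m)) * h1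
    - (((x.den : ℕ) : ZMod m) * ((x+y).den : ℕ) * (y.num : ZMod m)) * h2 + E

/-! ### The finite set `F` and integer `d` -/

open Classical in
noncomputable def Fset (S : Set ℕ) (m : ℕ) : Finset ℕ :=
  m.primeFactors.filter (fun p => p ∈ S)

noncomputable def dInt (S : Set ℕ) (m : ℕ) : ℕ := ∏ p ∈ Fset S m, p

lemma Fset_mem {S : Set ℕ} {m p : ℕ} (hp : p ∈ Fset S m) :
    p.Prime ∧ p ∣ m ∧ p ∈ S := by
  classical
  have h := hp
  simp only [Fset, Finset.mem_filter, Nat.mem_primeFactors] at h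
  exact ⟨h.1.1, h.1.2.1, h.2⟩

lemma mem_Fset {S : Set ℕ} {m p : ℕ} (hm : m ≠ 0) (hp : p.Prime) (hd : p ∣ m) (hS : p ∈ S) :
    p ∈ Fset S m := by
  classical
  simp only [Fset]
  rw [Finset.mem_filter]
  exact ⟨Nat.mem_primeFactors.2 ⟨hp, hd, hm⟩, hS⟩

lemma dInt_ne_zero (S : Set ℕ) (m : ℕ) : dInt S m ≠ 0 :=
  Finset.prod_ne_zero_iff.2 (fun p hp => (Fset_mem hp).1.ne_zero)

lemma padicValNat_dInt {S : Set ℕ} {m p : ℕ} (hp : p.Prime) :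
    padicValNat p (dInt S m) = if p ∈ Fset S m then 1 else 0 := by
  classical
  rw [← Nat.factorization_def _ hp, dInt,
    Nat.factorization_prod (fun q hq => (Fset_mem hq).1.ne_zero)]
  rw [Finsupp.finset_sum_apply]
  have hcong : ∀ q ∈ Fset S m, q.factorization p = if q = p then 1 else 0 := fun q hq => by
    rw [(Fset_mem hq).1.factorization, Finsupp.single_apply]
  rw [Finset.sum_congr rfl hcong, Finset.sum_ite_eq' (Fset S m) p (fun _ => 1)]

lemma prime_dvd_dInt {S : Set ℕ} {m q : ℕ} (hq : q.Prime) (hd : q ∣ dInt S m) :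
    q ∈ Fset S m := by
  haveI : Fact q.Prime := ⟨hq⟩
  have h1 := one_le_padicValNat_of_dvd (dInt_ne_zero S m) hd
  rw [padicValNat_dInt hq] at h1
  by_contra h
  simp [h] at h1

lemma padicValRat_neg_of_dvd_den {p : ℕ} (hp : p.Prime) {y : ℚ} (hd : p ∣ y.den) :
    padicValRat p y < 0 := by
  haveI : Fact p.Prime := ⟨hp⟩
  have h1 : 1 ≤ padicValNat p y.den := one_le_padicValNat_of_dvd y.den_nz hd
  have h2 : padicValInt p y.num = 0 := by
    apply padicValInt.eq_zero_of_not_dvd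
    rw [Int.natCast_dvd]
    intro hd2
    have hdd : p ∣ Nat.gcd y.num.natAbs y.den := Nat.dvd_gcd hd2 hd
    rw [Nat.Coprime.gcd_eq_one y.reduced] at hdd
    have := Nat.eq_one_of_dvd_one hdd
    have := hp.one_lt
    omega
  rw [padicValRat_def, h2]
  omega

lemma val_dmul {S : Set ℕ} {m : ℕ} {x : ℚ} (hx : x ∈ Hgrp S) (hx0 : x ≠ 0)
    {p : ℕ} (hp : p.Prime) (h2 : p ≠ 2) :
    padicValRat p ((dInt S m : ℚ) * x)
      = (padicValNat p (dInt S m) : ℤ) + padicValRat p x := by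
  haveI : Fact p.Prime := ⟨hp⟩
  have hd0 : ((dInt S m : ℕ) : ℚ) ≠ 0 := Nat.cast_ne_zero.2 (dInt_ne_zero S m)
  rw [padicValRat.mul hd0 hx0, padicValRat.of_nat]

lemma val_dmul_nonneg {S : Set ℕ} {m : ℕ} (hm : m ≠ 0) {x : ℚ} (hx : x ∈ Hgrp S)
    (hx0 : x ≠ 0) {p : ℕ} (hp : p.Prime) (h2 : p ≠ 2) (hpm : p ∣ m) :
    0 ≤ padicValRat p ((dInt S m : ℚ) * x) := by
  rw [val_dmul hx hx0 hp h2]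
  by_cases hS : p ∈ S
  · have : p ∈ Fset S m := mem_Fset hm hp hpm hS
    rw [padicValNat_dInt hp, if_pos this]
    have := (hx p hp h2).1
    omega
  · have := (hx p hp h2).2 hS
    omega

lemma den_dmul_coprime {S : Set ℕ} {m : ℕ} (hm : m ≠ 0) (hodd : ¬ 2 ∣ m)
    {x : ℚ} (hx : x ∈ Hgrp S) :
    (((dInt S m : ℚ) * x).den).Coprime m := by
  by_cases hx0 : x = 0
  · simp [hx0]
  rw [Nat.coprime_comm]
  by_contra h
  obtain ⟨q, hq, hq1, hq2⟩ := Nat.Prime.not_coprime_iff_dvd.1 h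
  have hq2' : q ≠ 2 := by rintro rfl; exact hodd hq1
  have hneg := padicValRat_neg_of_dvd_den hq hq2
  have hnonneg := val_dmul_nonneg hm hx hx0 hq hq2' hq1
  omega

noncomputable def phiH (S : Set ℕ) (m : ℕ) (hm : m ≠ 0) (hodd : ¬ 2 ∣ m) :
    ↥(Hgrp S) →+ ZMod m where
  toFun := fun x => phi0 m ((dInt S m : ℚ) * (x : ℚ))
  map_zero' := by simp [phi0]
  map_add' := by
    intro x y
    have hux : IsUnit ((((dInt S m : ℚ) * (x : ℚ)).den : ZMod m)) :=
      (ZMod.isUnit_iff_coprime _ m).2 (den_dmul_coprime hm hodd x.2)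
    have huy : IsUnit ((((dInt S m : ℚ) * (y : ℚ)).den : ZMod m)) :=
      (ZMod.isUnit_iff_coprime _ m).2 (den_dmul_coprime hm hodd y.2)
    have hdistrib : (dInt S m : ℚ) * ((x : ℚ) + (y : ℚ))
        = (dInt S m : ℚ) * (x : ℚ) + (dInt S m : ℚ) * (y : ℚ) := by ring
    show phi0 m ((dInt S m : ℚ) * ((x : ℚ) + (y : ℚ))) = _
    rw [hdistrib, phi0_add m hux huy]

lemma phiH_apply (S : Set ℕ) (m : ℕ) (hm : m ≠ 0) (hodd : ¬ 2 ∣ m) (x : ↥(Hgrp S)) :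
    phiH S m hm hodd x = phi0 m ((dInt S m : ℚ) * (x : ℚ)) := rfl

lemma phi0_eq_zero_iff {m : ℕ} {y : ℚ} (hu : IsUnit ((y.den : ℕ) : ZMod m)) :
    phi0 m y = 0 ↔ (m : ℤ) ∣ y.num := by
  rw [phi0]
  constructor
  · intro h
    have := congrArg (fun t => t * ((y.den : ℕ) : ZMod m)) h
    simp only [zero_mul] at this
    rw [mul_assoc, ZMod.inv_mul_of_unit _ hu, mul_one] at this
    exact (ZMod.intCast_zmod_eq_zero_iff_dvd _ _).1 this
  · intro h
    rw [(ZMod.intCast_zmod_eq_zero_iff_dvd y.num m).2 h, zero_mul]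

lemma ker_phiH (S : Set ℕ) (m : ℕ) (hm : m ≠ 0) (hodd : ¬ 2 ∣ m) :
    AddSubgroup.map (zsmulAddGroupHom ((m : ℤ)) : ↥(Hgrp S) →+ ↥(Hgrp S)) ⊤
      = (phiH S m hm hodd).ker := by
  apply le_antisymm
  · rintro y ⟨x, -, rfl⟩
    rw [AddMonoidHom.mem_ker, zsmulAddGroupHom_apply, map_zsmul, zsmul_eq_mul]
    push_cast
    rw [ZMod.natCast_self, zero_mul]
  · intro x hx
    rw [AddMonoidHom.mem_ker, phiH_apply] at hx
    by_cases hx0 : (x : ℚ) = 0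
    · refine ⟨0, trivial, ?_⟩
      rw [zsmulAddGroupHom_apply, smul_zero]
      exact (Subtype.ext hx0).symm
    have hmQ : ((m : ℕ) : ℚ) ≠ 0 := Nat.cast_ne_zero.2 hm
    set y : ℚ := (dInt S m : ℚ) * (x : ℚ) with hy
    have hy0 : y ≠ 0 := mul_ne_zero (Nat.cast_ne_zero.2 (dInt_ne_zero S m)) hx0
    have hcop := den_dmul_coprime hm hodd (S := S) (m := m) x.2
    have hdvd : (m : ℤ) ∣ y.num :=
      (phi0_eq_zero_iff ((ZMod.isUnit_iff_coprime _ m).2 hcop)).1 hx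
    have hw : (x : ℚ) / m ∈ Hgrp S := by
      intro p hp h2
      haveI : Fact p.Prime := ⟨hp⟩
      have hval : padicValRat p ((x : ℚ) / m)
          = padicValRat p (x : ℚ) - padicValNat p m := by
        rw [padicValRat.div hx0 hmQ, padicValRat.of_nat]
      by_cases hpm : p ∣ m
      · have hden : ¬ p ∣ y.den := by
          intro hd
          have := Nat.dvd_gcd hd hpm
          rw [Nat.Coprime.gcd_eq_one hcop] at this
          have := Nat.eq_one_of_dvd_one this
          have := hp.one_lt
          omega
        have hvy : padicValRat p y = padicValInt p y.num := by
          rw [padicValRat_def, padicValNat.eq_zero_of_not_dvd hden]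
          simp
        obtain ⟨k, hk⟩ := hdvd
        have hk0 : k ≠ 0 := by
          rintro rfl
          rw [mul_zero] at hk
          exact (Rat.num_ne_zero.2 hy0) hk
        have hnum : (padicValNat p m : ℤ) ≤ padicValInt p y.num := by
          rw [hk, padicValInt.mul (by exact_mod_cast hm) hk0, padicValInt.of_nat]
          have : (0:ℤ) ≤ padicValInt p k := Int.natCast_nonneg _
          omega
        have hvy2 := val_dmul (m := m) x.2 hx0 hp h2
        rw [← hy] at hvy2
        rw [hvy] at hvy2
        have hdle : padicValNat p (dInt S m) ≤ 1 := by
          rw [padicValNat_dInt hp]; split <;> omega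
        have hdS : p ∉ S → padicValNat p (dInt S m) = 0 := fun hS => by
          rw [padicValNat_dInt hp, if_neg (fun hc => hS (Fset_mem hc).2.2)]
        constructor
        · rw [hval]; omega
        · intro hS
          have := hdS hS
          rw [hval]
          omega
      · rw [hval, padicValNat.eq_zero_of_not_dvd hpm]
        have h1 := (x.2 p hp h2).1
        have h2' := (x.2 p hp h2).2
        constructor
        · omega
        · intro hS; have := h2' hS; omega
    refine ⟨⟨(x : ℚ) / m, hw⟩, trivial, ?_⟩
    apply Subtype.ext
    rw [zsmulAddGroupHom_apply]
    show ((m : ℤ) • (((x : ℚ) / m)) : ℚ) = (x : ℚ)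
    rw [zsmul_eq_mul]
    push_cast
    field_simp

lemma phiH_one (S : Set ℕ) (m : ℕ) (hm : m ≠ 0) (hodd : ¬ 2 ∣ m) :
    phiH S m hm hodd ⟨1, one_mem_Hgrp S⟩ = ((dInt S m : ℕ) : ZMod m) := by
  rw [phiH_apply]
  have h1 : (dInt S m : ℚ) * (1:ℚ) = (((dInt S m : ℕ) : ℤ) : ℚ) := by push_cast; ring
  rw [h1, phi0_intCast]
  push_cast
  rfl

lemma phiH_inv_prime (S : Set ℕ) (m : ℕ) (hm : m ≠ 0) (hodd : ¬ 2 ∣ m)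
    {p : ℕ} (hpF : p ∈ Fset S m) :
    phiH S m hm hodd ⟨(p:ℚ)⁻¹, inv_prime_mem (Fset_mem hpF).1 (Fset_mem hpF).2.2⟩
      = (((∏ q ∈ (Fset S m).erase p, q : ℕ) : ℤ) : ZMod m) := by
  classical
  rw [phiH_apply]
  have hsplit : (p : ℕ) * (∏ q ∈ (Fset S m).erase p, q) = dInt S m := by
    rw [dInt]; exact Finset.mul_prod_erase _ (fun q => q) hpF
  have hp0 : ((p:ℕ):ℚ) ≠ 0 := Nat.cast_ne_zero.2 (Fset_mem hpF).1.ne_zero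
  have h1 : (dInt S m : ℚ) * ((p:ℕ):ℚ)⁻¹ = (((∏ q ∈ (Fset S m).erase p, q : ℕ) : ℤ) : ℚ) := by
    rw [← hsplit]
    push_cast
    field_simp
  rw [h1, phi0_intCast]

lemma phiH_surjective (S : Set ℕ) (m : ℕ) (hm : m ≠ 0) (hodd : ¬ 2 ∣ m) :
    Function.Surjective (phiH S m hm hodd) := by
  classical
  set φ := phiH S m hm hodd with hφ
  set R : AddSubgroup ℤ := AddSubgroup.comap (Int.castAddHom (ZMod m)) φ.range with hR
  have hmem_m : (m : ℤ) ∈ R := by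
    simp only [hR, AddSubgroup.mem_comap, Int.coe_castAddHom, Int.cast_natCast,
      ZMod.natCast_self]
    exact zero_mem _
  have hmem_d : ((dInt S m : ℕ) : ℤ) ∈ R := by
    simp only [hR, AddSubgroup.mem_comap, Int.coe_castAddHom]
    exact ⟨⟨1, one_mem_Hgrp S⟩, by rw [phiH_one]; push_cast; rfl⟩
  have hmem_e : ∀ p ∈ Fset S m, ((∏ q ∈ (Fset S m).erase p, q : ℕ) : ℤ) ∈ R := by
    intro p hpF
    simp only [hR, AddSubgroup.mem_comap, Int.coe_castAddHom]
    exact ⟨_, phiH_inv_prime S m hm hodd hpF⟩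
  obtain ⟨a, ha⟩ := Int.subgroup_cyclic R
  have hdvd : ∀ z : ℤ, z ∈ R → a ∣ z := by
    intro z hz
    rw [ha, AddSubgroup.mem_closure_singleton] at hz
    obtain ⟨k, hk⟩ := hz
    exact ⟨k, by rw [← hk, zsmul_eq_mul]; push_cast; ring⟩
  have had : a.natAbs ∣ dInt S m := by
    have h := Int.natAbs_dvd_natAbs.2 (hdvd _ hmem_d)
    rwa [Int.natAbs_natCast] at h
  have hae : ∀ p ∈ Fset S m, a.natAbs ∣ ∏ q ∈ (Fset S m).erase p, q := by
    intro p hpF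
    have h := Int.natAbs_dvd_natAbs.2 (hdvd _ (hmem_e p hpF))
    rwa [Int.natAbs_natCast] at h
  have haN : a.natAbs = 1 := by
    rw [Nat.eq_one_iff_not_exists_prime_dvd]
    intro q hq hqa
    have hqF : q ∈ Fset S m := prime_dvd_dInt hq (hqa.trans had)
    have hqe : q ∣ ∏ r ∈ (Fset S m).erase q, r := hqa.trans (hae q hqF)
    obtain ⟨r, hrmem, hqr⟩ := (Prime.dvd_finset_prod_iff hq.prime _).1 hqe
    have : q = r := (Nat.prime_dvd_prime_iff_eq hq (Fset_mem (Finset.mem_of_mem_erase hrmem)).1).1 hqr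
    exact Finset.notMem_erase q (Fset S m) (this ▸ hrmem)
  have haU : IsUnit a := Int.isUnit_iff_natAbs_eq.2 haN
  intro t
  obtain ⟨z, rfl⟩ := ZMod.intCast_surjective (n := m) t
  have hzR : z ∈ R := by
    rw [ha, AddSubgroup.mem_closure_singleton]
    obtain ⟨k, hk⟩ := haU.dvd (α := ℤ) (a := z)
    exact ⟨k, by rw [zsmul_eq_mul, hk]; push_cast; ring⟩
  simpa only [hR, AddSubgroup.mem_comap, Int.coe_castAddHom, AddMonoidHom.mem_range] using hzR

lemma quotient_facts (S : Set ℕ) (n : ℕ) (hn : 1 ≤ n) :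
    Finite (↥(Hgrp S) ⧸ AddSubgroup.map
        (zsmulAddGroupHom ((2 : ℤ) ^ n - 1) : ↥(Hgrp S) →+ ↥(Hgrp S)) ⊤) ∧
    Nat.card (↥(Hgrp S) ⧸ AddSubgroup.map
        (zsmulAddGroupHom ((2 : ℤ) ^ n - 1) : ↥(Hgrp S) →+ ↥(Hgrp S)) ⊤) = 2 ^ n - 1 := by
  set m : ℕ := 2 ^ n - 1 with hmdef
  have h2n : 2 ≤ 2 ^ n := by
    calc (2:ℕ) = 2^1 := by norm_num
    _ ≤ 2^n := Nat.pow_le_pow_right (by norm_num) hn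
  have hm : m ≠ 0 := by omega
  have hodd : ¬ 2 ∣ m := by
    have : 2 ∣ 2^n := dvd_pow_self 2 (by omega)
    omega
  have hc : ((2 : ℤ) ^ n - 1) = ((m : ℕ) : ℤ) := by
    rw [hmdef, Nat.cast_sub (by omega)]
    push_cast
    ring
  haveI : NeZero m := ⟨hm⟩
  have hker := ker_phiH S m hm hodd
  have hsurj := phiH_surjective S m hm hodd
  rw [hc, hker]
  constructor
  · exact Finite.of_equiv _ (QuotientAddGroup.quotientKerEquivOfSurjective _ hsurj).symm.toEquiv
  · rw [Nat.card_congr (QuotientAddGroup.quotientKerEquivOfSurjective _ hsurj).toEquiv,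
      Nat.card_zmod]

/-! ### An uncountable almost-disjoint family -/

lemma oddPrime_infinite : {p : ℕ | p.Prime ∧ p ≠ 2}.Infinite := by
  have h := Nat.infinite_setOf_prime
  have heq : {p : ℕ | p.Prime ∧ p ≠ 2} = {p : ℕ | p.Prime} \ {2} := by
    ext p; simp [Set.mem_diff]
  rw [heq]
  exact h.diff (Set.finite_singleton 2)

def code (α : ℕ → Bool) (k : ℕ) : ℕ :=
  Nat.pair k (Encodable.encode (List.ofFn (fun i : Fin k => α i)))

lemma code_injective (α : ℕ → Bool) : Function.Injective (code α) := by
  intro a b h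
  have := congrArg (fun t => (Nat.unpair t).1) h
  simpa [code, Nat.unpair_pair] using this

lemma code_eq_code {α β : ℕ → Bool} {k k' : ℕ} (h : code α k = code β k') :
    k = k' ∧ ∀ i, i < k → α i = β i := by
  have h1 := congrArg (fun t => (Nat.unpair t).1) h
  simp only [code, Nat.unpair_pair] at h1
  subst h1
  have h2 := congrArg (fun t => (Nat.unpair t).2) h
  simp only [code, Nat.unpair_pair] at h2
  have h3 := Encodable.encode_injective h2
  rw [List.ofFn_inj] at h3
  refine ⟨rfl, fun i hi => ?_⟩
  exact congrFun h3 ⟨i, hi⟩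

def Aset (α : ℕ → Bool) : Set ℕ := Set.range (code α)

lemma Aset_diff_infinite {α β : ℕ → Bool} (h : α ≠ β) : (Aset α \ Aset β).Infinite := by
  obtain ⟨j, hj⟩ : ∃ j, α j ≠ β j := by
    by_contra hc
    push_neg at hc
    exact h (funext hc)
  refine Set.infinite_of_injective_forall_mem
    (f := fun t : ℕ => code α (t + j + 1)) ?_ ?_
  · intro a b hab
    have := code_injective α hab
    omega
  · intro t
    refine ⟨⟨t + j + 1, rfl⟩, ?_⟩
    rintro ⟨k', hk'⟩
    obtain ⟨hk, hpre⟩ := code_eq_code hk'.symm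
    exact hj (hpre j (by omega))

noncomputable def nthOdd : ℕ → ℕ := Nat.nth (fun p => p.Prime ∧ p ≠ 2)

lemma nthOdd_mem (k : ℕ) : (nthOdd k).Prime ∧ nthOdd k ≠ 2 :=
  Nat.nth_mem_of_infinite oddPrime_infinite k

lemma nthOdd_inj : Function.Injective nthOdd :=
  Nat.nth_injective oddPrime_infinite

noncomputable def Sfam (α : ℕ → Bool) : Set ℕ := nthOdd '' (Aset α)

lemma Sfam_mem {α : ℕ → Bool} {p : ℕ} (hp : p ∈ Sfam α) : p.Prime ∧ p ≠ 2 := by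
  obtain ⟨k, -, rfl⟩ := hp
  exact nthOdd_mem k

lemma Sfam_diff_infinite {α β : ℕ → Bool} (h : α ≠ β) :
    {p : ℕ | p ∈ Sfam α ∧ p ∉ Sfam β ∧ p.Prime ∧ p ≠ 2}.Infinite := by
  have hsub : nthOdd '' (Aset α \ Aset β) ⊆
      {p : ℕ | p ∈ Sfam α ∧ p ∉ Sfam β ∧ p.Prime ∧ p ≠ 2} := by
    rintro p ⟨a, ⟨haA, haB⟩, rfl⟩
    refine ⟨⟨a, haA, rfl⟩, ?_, nthOdd_mem a⟩
    rintro ⟨b, hbB, hba⟩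
    exact haB (nthOdd_inj hba ▸ hbB)
  exact Set.Infinite.mono hsub
    ((Aset_diff_infinite h).image (Set.injOn_of_injective nthOdd_inj))

lemma uncountable_funBool : ¬ Countable (ℕ → Bool) := by
  intro h
  obtain ⟨g, hg⟩ := exists_injective_nat (ℕ → Bool)
  classical
  have h2 : Function.Injective (fun s : Set ℕ => g (fun n => decide (n ∈ s))) := by
    intro s t hst
    have := hg hst
    ext n
    have hfn := congrFun this n
    exact decide_eq_decide.1 hfn
  exact Function.cantor_injective _ h2


/-- There exists an uncountable family of additive subgroups `H` of `ℚ`,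
pairwise non-isomorphic as abstract abelian groups, such that each `H` contains `ℤ`, each
`H` is invariant under multiplication by `2` and by `1/2` (so `x ↦ 2x` is a group
automorphism of `H`), and for every `n ≥ 1` the quotient group `H/(2ⁿ − 1)H` is finite of
cardinality `2ⁿ − 1`. -/
theorem stmt_14 :
    ∃ 𝒜 : Set (AddSubgroup ℚ),
      ¬ 𝒜.Countable ∧
      (∀ H ∈ 𝒜, ∀ m : ℤ, (m : ℚ) ∈ H) ∧
      (∀ H ∈ 𝒜, ∀ x : ℚ, x ∈ H → 2 * x ∈ H ∧ x / 2 ∈ H) ∧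
      (∀ H₁ ∈ 𝒜, ∀ H₂ ∈ 𝒜, H₁ ≠ H₂ → IsEmpty (↥H₁ ≃+ ↥H₂)) ∧
      (∀ H ∈ 𝒜, ∀ n : ℕ, 1 ≤ n →
        Finite (↥H ⧸ AddSubgroup.map (zsmulAddGroupHom ((2 : ℤ) ^ n - 1) : ↥H →+ ↥H) ⊤) ∧
        Nat.card (↥H ⧸ AddSubgroup.map (zsmulAddGroupHom ((2 : ℤ) ^ n - 1) : ↥H →+ ↥H) ⊤) =
          2 ^ n - 1) := by
  refine ⟨Set.range (fun α : ℕ → Bool => Hgrp (Sfam α)), ?_, ?_, ?_, ?_, ?_⟩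
  · -- uncountable
    intro hc
    have hinj : Function.Injective (fun α : ℕ → Bool => Hgrp (Sfam α)) := by
      intro α β hab
      by_contra hne
      obtain ⟨p, hpα, hpβ, hp, h2⟩ := (Sfam_diff_infinite hne).nonempty
      have h1 : (p : ℚ)⁻¹ ∈ Hgrp (Sfam α) := inv_prime_mem hp hpα
      have h2' : (p : ℚ)⁻¹ ∉ Hgrp (Sfam β) := inv_prime_not_mem hp h2 hpβ
      simp only [] at hab
      rw [hab] at h1
      exact h2' h1
    haveI := hc.to_subtype
    have := Countable.of_equiv _ (Equiv.ofInjective _ hinj).symm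
    exact uncountable_funBool this
  · rintro H ⟨α, rfl⟩ k
    exact intCast_mem_Hgrp _ k
  · rintro H ⟨α, rfl⟩ x hx
    exact ⟨two_mul_mem hx, half_mem hx⟩
  · rintro H₁ ⟨α, rfl⟩ H₂ ⟨β, rfl⟩ hne
    have hab : α ≠ β := by rintro rfl; exact hne rfl
    exact no_iso (Sfam_diff_infinite hab)
  · rintro H ⟨α, rfl⟩ n hn
    exact quotient_facts _ n hn
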